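/- Let Γ be a finite simplicial graph. The right-angled Coxeter group C_Γ is large if and only if some vertex of Γ is non-adjacent to at least two other vertices of Γ (equivalently, if and only if Γ does not decompose as the join of a complete graph with copies of the disjoint union of two single vertices). -/

import Mathlib

/-- The set of commutation relators defining a graph product. -/
def graphProdRels {V : Type*} (Γ : SimpleGraph V) (G : V → Type*) [∀ w, Group (G w)] :
    Set (Monoid.CoprodI G) :=
  {x | ∃ (u v : V) (_ : Γ.Adj u v) (g : G u) (h : G v),
    x = Monoid.CoprodI.of g * Monoid.CoprodI.of h *
      (Monoid.CoprodI.of g)⁻¹ * (Monoid.CoprodI.of h)⁻¹}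

/-- The graph product of the family of groups `G` over the simplicial graph `Γ`. -/
def GraphProduct {V : Type*} (Γ : SimpleGraph V) (G : V → Type*) [∀ w, Group (G w)] :=
  Monoid.CoprodI G ⧸ Subgroup.normalClosure (graphProdRels Γ G)

instance {V : Type*} (Γ : SimpleGraph V) (G : V → Type*) [∀ w, Group (G w)] :
    Group (GraphProduct Γ G) :=
  inferInstanceAs (Group (Monoid.CoprodI G ⧸ Subgroup.normalClosure (graphProdRels Γ G)))

/-- The canonical map from a vertex group into the graph product. -/
def GraphProduct.of {V : Type*} (Γ : SimpleGraph V) (G : V → Type*) [∀ w, Group (G w)]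
    (u : V) : G u →* GraphProduct Γ G :=
  (QuotientGroup.mk' (Subgroup.normalClosure (graphProdRels Γ G))).comp Monoid.CoprodI.of

/-- The vertex subgroup of the graph product at the vertex `u`. -/
def vertexSubgroup {V : Type*} (Γ : SimpleGraph V) (G : V → Type*) [∀ w, Group (G w)]
    (u : V) : Subgroup (GraphProduct Γ G) :=
  (GraphProduct.of Γ G u).range

/-- An automorphism of the graph product is conjugating if it sends each vertex subgroup to
a conjugate of a vertex subgroup. -/
def IsConjugating {V : Type*} (Γ : SimpleGraph V) (G : V → Type*) [∀ w, Group (G w)]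
    (φ : MulAut (GraphProduct Γ G)) : Prop :=
  ∀ u : V, ∃ (v : V) (g : GraphProduct Γ G),
    Subgroup.map φ.toMonoidHom (vertexSubgroup Γ G u) =
      Subgroup.map (MulAut.conj g).toMonoidHom (vertexSubgroup Γ G v)

/-- An automorphism of the graph product is in `PConjAut` if it sends each vertex subgroup to
a conjugate of itself. -/
def IsPConjugating {V : Type*} (Γ : SimpleGraph V) (G : V → Type*) [∀ w, Group (G w)]
    (φ : MulAut (GraphProduct Γ G)) : Prop :=
  ∀ u : V, ∃ g : GraphProduct Γ G,
    Subgroup.map φ.toMonoidHom (vertexSubgroup Γ G u) =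
      Subgroup.map (MulAut.conj g).toMonoidHom (vertexSubgroup Γ G u)

/-- A vertex is universal if it is adjacent to every other vertex. -/
def IsUniversal {V : Type*} (Γ : SimpleGraph V) (u : V) : Prop :=
  ∀ v : V, v ≠ u → Γ.Adj u v

/-- Some vertex is non-adjacent to at least two other vertices. -/
def HasVertexWithTwoNonNeighbors {V : Type*} (Γ : SimpleGraph V) : Prop :=
  ∃ u v w : V, v ≠ w ∧ v ≠ u ∧ w ≠ u ∧ ¬Γ.Adj u v ∧ ¬Γ.Adj u w

/-- A group `G` is SQ-universal if every countable group embeds into a quotient of `G`. -/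
def SQUniversal (G : Type*) [Group G] : Prop :=
  ∀ (Q : Type) [Group Q] [Countable Q],
    ∃ (N : Subgroup G) (hN : N.Normal),
      haveI := hN
      ∃ f : Q →* G ⧸ N, Function.Injective f

/-- A quasimorphism on a group. -/
def IsQuasimorphism {H : Type*} [Group H] (f : H → ℝ) : Prop :=
  ∃ C : ℝ, 0 ≤ C ∧ ∀ g h : H, |f (g * h) - f g - f h| ≤ C

/-- A homogeneous map on a group. -/
def IsHomogeneous {H : Type*} [Group H] (f : H → ℝ) : Prop :=
  ∀ (g : H) (k : ℤ), f (g ^ k) = (k : ℝ) * f g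

/-- The space of homogeneous quasimorphisms of `H` is infinite-dimensional, expressed as: it is
not contained in the span of any finite set of functions. -/
def HasManyQuasimorphisms (H : Type*) [Group H] : Prop :=
  ¬ ∃ s : Finset (H → ℝ), ∀ f : H → ℝ, IsQuasimorphism f → IsHomogeneous f →
      f ∈ Submodule.span ℝ (s : Set (H → ℝ))

/-- A group virtually has many quasimorphisms if some finite-index subgroup has an
infinite-dimensional space of homogeneous quasimorphisms. -/
def VirtuallyManyQuasimorphisms (G : Type*) [Group G] : Prop :=
  ∃ H : Subgroup G, H.FiniteIndex ∧ HasManyQuasimorphisms H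

/-- A group is boundedly generated if it is the product of finitely many cyclic subgroups. -/
def BoundedlyGenerated (G : Type*) [Group G] : Prop :=
  ∃ l : List G, ∀ g : G, ∃ m : List ℤ, m.length = l.length ∧
    g = (List.zipWith (fun x (k : ℤ) => x ^ k) l m).prod

/-- A group is large if a finite-index subgroup surjects onto a nonabelian free group. -/
def IsLarge (G : Type*) [Group G] : Prop :=
  ∃ H : Subgroup G, H.FiniteIndex ∧ ∃ f : H →* FreeGroup (Fin 2), Function.Surjective f

/-- A group is virtually free abelian if it has a finite-index subgroup isomorphic to `ℤⁿ`. -/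
def VirtuallyFreeAbelian (G : Type*) [Group G] : Prop :=
  ∃ H : Subgroup G, H.FiniteIndex ∧ ∃ n : ℕ, Nonempty (H ≃* Multiplicative (Fin n → ℤ))

/-- The relators of a right-angled Coxeter group. -/
def racgRels {V : Type*} (Γ : SimpleGraph V) : Set (FreeGroup V) :=
  {w | (∃ v : V, w = FreeGroup.of v * FreeGroup.of v) ∨
    ∃ u v : V, Γ.Adj u v ∧ w = (FreeGroup.of u * FreeGroup.of v) ^ 2}

/-- The right-angled Coxeter group of a simplicial graph. -/
def RACG {V : Type*} (Γ : SimpleGraph V) := PresentedGroup (racgRels Γ)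

instance {V : Type*} (Γ : SimpleGraph V) : Group (RACG Γ) :=
  inferInstanceAs (Group (PresentedGroup (racgRels Γ)))



/-! ### Auxiliary machinery for the proof -/

/-- Homomorphism from `Multiplicative (ZMod 2)` determined by an involution. -/
def invHom {G : Type*} [Group G] (s : G) (hs : s * s = 1) : Multiplicative (ZMod 2) →* G where
  toFun z := s ^ (Multiplicative.toAdd z).val
  map_one' := by simp
  map_mul' a b := by
    have hs2 : s ^ 2 = 1 := by rw [pow_two]; exact hs
    have key : ∀ n : ℕ, s ^ (n % 2) = s ^ n := fun n => by
      conv_rhs => rw [← Nat.div_add_mod n 2, pow_add, pow_mul, hs2, one_pow, one_mul]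
    show s ^ (ZMod.val (Multiplicative.toAdd a + Multiplicative.toAdd b)) = _
    rw [ZMod.val_add, key, pow_add]

@[simp] lemma invHom_apply_one {G : Type*} [Group G] (s : G) (hs : s * s = 1) :
    invHom s hs (Multiplicative.ofAdd 1) = s := by
  show s ^ (1 : ZMod 2).val = s
  simp [ZMod.val_one]

lemma invHom_pow {G : Type*} [Group G] (s : G) (hs : s * s = 1) (z : Multiplicative (ZMod 2)) :
    invHom s hs z = s ^ (Multiplicative.toAdd z).val := rfl

/-- The Heisenberg group over ℤ. -/
def Heis : Type := ℤ × ℤ × ℤ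

def heisMul (p q : Heis) : Heis := (p.1 + q.1, p.2.1 + q.2.1, p.2.2 + q.2.2 + p.1 * q.2.1)
def heisInv (p : Heis) : Heis := (-p.1, -p.2.1, -p.2.2 + p.1 * p.2.1)

def heisOne : Heis := ((0 : ℤ), (0 : ℤ), (0 : ℤ))

instance : Group Heis where
  mul := heisMul
  one := heisOne
  inv := heisInv
  mul_assoc p q r := by
    show heisMul (heisMul p q) r = heisMul p (heisMul q r)
    refine Prod.ext ?_ (Prod.ext ?_ ?_) <;> simp [heisMul] <;> ring
  one_mul p := by
    show heisMul heisOne p = p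
    refine Prod.ext ?_ (Prod.ext ?_ ?_) <;> simp [heisMul, heisOne]
  mul_one p := by
    show heisMul p heisOne = p
    refine Prod.ext ?_ (Prod.ext ?_ ?_) <;> simp [heisMul, heisOne]
  inv_mul_cancel p := by
    show heisMul (heisInv p) p = heisOne
    refine Prod.ext ?_ (Prod.ext ?_ ?_) <;> simp [heisMul, heisInv, heisOne] <;> ring

lemma heis_mul (a b : Heis) :
    a * b = (a.1 + b.1, a.2.1 + b.2.1, a.2.2 + b.2.2 + a.1 * b.2.1) := rfl

def heisX : Heis := ((1 : ℤ), (0 : ℤ), (0 : ℤ))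
def heisY : Heis := ((0 : ℤ), (1 : ℤ), (0 : ℤ))

lemma heisX_pow (m : ℕ) : heisX ^ m = ((m : ℤ), (0 : ℤ), (0 : ℤ)) := by
  induction m with
  | zero => rfl
  | succ n ih => rw [pow_succ, ih]; show heisMul _ _ = _; simp [heisMul, heisX]; rfl

lemma heisY_pow (m : ℕ) : heisY ^ m = ((0 : ℤ), (m : ℤ), (0 : ℤ)) := by
  induction m with
  | zero => rfl
  | succ n ih => rw [pow_succ, ih]; show heisMul _ _ = _; simp [heisMul, heisY]; rfl

/-- Powers of the two generators of a free group of rank two never commute. -/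
lemma freeGroup_pow_not_commute {m n : ℕ} (hm : 0 < m) (hn : 0 < n) :
    ¬ Commute ((FreeGroup.of (0 : Fin 2)) ^ m) ((FreeGroup.of (1 : Fin 2)) ^ n) := by
  intro hc
  set θ' : FreeGroup (Fin 2) →* Heis :=
    FreeGroup.lift (fun i : Fin 2 => if i = 0 then heisX else heisY) with hθ'
  have hx : θ' (FreeGroup.of 0) = heisX := by simp [hθ']
  have hy : θ' (FreeGroup.of 1) = heisY := by simp [hθ']
  have h := congrArg θ' hc
  rw [map_mul, map_mul, map_pow, map_pow, hx, hy, heisX_pow, heisY_pow] at h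
  change heisMul _ _ = heisMul _ _ at h
  unfold heisMul at h
  have h3 := congrArg (fun p : Heis => p.2.2) h
  simp only at h3
  have h4 : (m : ℤ) * n = 0 := by linarith [h3]
  rcases mul_eq_zero.mp h4 with h | h <;>
    [skip; skip] <;> simp only [Int.natCast_eq_zero] at h <;> omega

section Target

abbrev FG2 := FreeGroup (Fin 2)

/-- The endomorphism of the free group inverting each generator. -/
def invEnd : FG2 →* FG2 := FreeGroup.lift (fun i => (FreeGroup.of i)⁻¹)

lemma invEnd_invEnd : invEnd.comp invEnd = MonoidHom.id FG2 := by
  apply FreeGroup.ext_hom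
  intro a
  simp [invEnd]

/-- The automorphism of the free group of rank 2 inverting each generator. -/
def sigmaAut : MulAut FG2 := MonoidHom.toMulEquiv invEnd invEnd invEnd_invEnd invEnd_invEnd

/-- The automorphism of the free group of rank 2 swapping the generators. -/
def tauAut : MulAut FG2 := FreeGroup.freeGroupCongr (Equiv.swap (0 : Fin 2) 1)

@[simp] lemma sigmaAut_of (i : Fin 2) : sigmaAut (FreeGroup.of i) = (FreeGroup.of i)⁻¹ := by
  simp [sigmaAut, invEnd, MonoidHom.toMulEquiv]

@[simp] lemma tauAut_of (i : Fin 2) :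
    tauAut (FreeGroup.of i) = FreeGroup.of (Equiv.swap (0 : Fin 2) 1 i) := by
  simp [tauAut]

lemma mulAut_ext_fg2 {e₁ e₂ : MulAut FG2}
    (h : ∀ i, e₁ (FreeGroup.of i) = e₂ (FreeGroup.of i)) : e₁ = e₂ := by
  have := FreeGroup.ext_hom e₁.toMonoidHom e₂.toMonoidHom h
  ext x
  exact DFunLike.congr_fun this x

lemma sigmaAut_sq : sigmaAut * sigmaAut = 1 := by
  apply mulAut_ext_fg2
  intro i
  simp [MulAut.mul_apply]

lemma tauAut_sq : tauAut * tauAut = 1 := by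
  apply mulAut_ext_fg2
  intro i
  fin_cases i <;> simp [MulAut.mul_apply, Equiv.swap_apply_def]

lemma sigma_tau_comm : Commute sigmaAut tauAut := by
  apply mulAut_ext_fg2
  intro i
  fin_cases i <;> simp [MulAut.mul_apply]

abbrev QK := Multiplicative (ZMod 2) × Multiplicative (ZMod 2)

/-- The action of the Klein four-group on the free group of rank two. -/
def phiQ : QK →* MulAut FG2 :=
  (invHom sigmaAut sigmaAut_sq).noncommCoprod (invHom tauAut tauAut_sq)
    (fun m n => by
      show Commute (sigmaAut ^ _) (tauAut ^ _)
      exact (sigma_tau_comm).pow_pow _ _)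

abbrev TT := SemidirectProduct FG2 QK phiQ

def sElt : QK := (Multiplicative.ofAdd 1, 1)
def tElt : QK := (1, Multiplicative.ofAdd 1)

lemma phiQ_s : phiQ sElt = sigmaAut := by
  simp [phiQ, sElt, MonoidHom.noncommCoprod_apply]

lemma phiQ_t : phiQ tElt = tauAut := by
  simp [phiQ, tElt, MonoidHom.noncommCoprod_apply]

def AA : TT := ⟨FreeGroup.of 0, sElt⟩
def BB1 : TT := ⟨1, sElt⟩
def BB2 : TT := ⟨1, tElt⟩

lemma s_mul_s : sElt * sElt = 1 := by decide
lemma t_mul_t : tElt * tElt = 1 := by decide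

lemma AA_sq : AA * AA = 1 := by
  apply SemidirectProduct.ext
  · show FreeGroup.of 0 * phiQ sElt (FreeGroup.of 0) = 1
    rw [phiQ_s, sigmaAut_of, mul_inv_cancel]
  · show sElt * sElt = 1
    exact s_mul_s

lemma BB1_sq : BB1 * BB1 = 1 := by
  apply SemidirectProduct.ext
  · show (1 : FG2) * phiQ sElt 1 = 1
    simp
  · exact s_mul_s

lemma BB2_sq : BB2 * BB2 = 1 := by
  apply SemidirectProduct.ext
  · show (1 : FG2) * phiQ tElt 1 = 1
    simp
  · exact t_mul_t

lemma BB12_sq : (BB1 * BB2) * (BB1 * BB2) = 1 := by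
  apply SemidirectProduct.ext
  · show ((BB1 * BB2) * (BB1 * BB2)).left = 1
    simp [SemidirectProduct.mul_left, BB1, BB2]
  · show (sElt * tElt) * (sElt * tElt) = 1
    decide

lemma BB21_sq : (BB2 * BB1) * (BB2 * BB1) = 1 := by
  apply SemidirectProduct.ext
  · show ((BB2 * BB1) * (BB2 * BB1)).left = 1
    simp [SemidirectProduct.mul_left, BB1, BB2]
  · show (tElt * sElt) * (tElt * sElt) = 1
    decide

-- key computations for the witnesses
lemma word1 : AA * BB1 = ⟨FreeGroup.of 0, 1⟩ := by
  apply SemidirectProduct.ext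
  · show FreeGroup.of 0 * phiQ sElt 1 = FreeGroup.of 0
    simp
  · exact s_mul_s

lemma word2 : BB2 * AA * BB2 * BB1 = ⟨FreeGroup.of 1, 1⟩ := by
  have h1 : BB2 * AA = ⟨FreeGroup.of 1, tElt * sElt⟩ := by
    apply SemidirectProduct.ext
    · show (1 : FG2) * phiQ tElt (FreeGroup.of 0) = FreeGroup.of 1
      rw [phiQ_t, one_mul, tauAut_of]
      simp
    · rfl
  have h2 : BB2 * AA * BB2 = ⟨FreeGroup.of 1, tElt * sElt * tElt⟩ := by
    rw [h1]
    apply SemidirectProduct.ext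
    · show FreeGroup.of 1 * phiQ (tElt * sElt) 1 = FreeGroup.of 1
      simp
    · rfl
  rw [h2]
  apply SemidirectProduct.ext
  · show FreeGroup.of 1 * phiQ (tElt * sElt * tElt) 1 = FreeGroup.of 1
    simp
  · show tElt * sElt * tElt * sElt = 1
    decide

end Target

section LargeDirection

theorem isLarge_of_hasVertex {V : Type} (Γ : SimpleGraph V)
    (h : HasVertexWithTwoNonNeighbors Γ) : IsLarge (RACG Γ) := by
  classical
  obtain ⟨u, v, w, hvw, hvu, hwu, hadj1, hadj2⟩ := h
  set fV : V → TT := fun z => if z = u then AA else if z = v then BB1 else if z = w then BB2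
    else 1 with hfV
  have hvalu : fV u = AA := by simp [hfV]
  have hvalv : fV v = BB1 := by simp [hfV, hvu]
  have hvalw : fV w = BB2 := by simp [hfV, hwu, hvw.symm]
  have hval : ∀ z : V, fV z = 1 ∨ (z = u ∧ fV z = AA) ∨ (z = v ∧ fV z = BB1) ∨
      (z = w ∧ fV z = BB2) := by
    intro z
    by_cases h1 : z = u
    · exact Or.inr (Or.inl ⟨h1, by rw [h1, hvalu]⟩)
    by_cases h2 : z = v
    · exact Or.inr (Or.inr (Or.inl ⟨h2, by rw [h2, hvalv]⟩))
    by_cases h3 : z = w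
    · exact Or.inr (Or.inr (Or.inr ⟨h3, by rw [h3, hvalw]⟩))
    exact Or.inl (by simp [hfV, h1, h2, h3])
  have hsq : ∀ z : V, fV z * fV z = 1 := by
    intro z
    rcases hval z with h1 | ⟨_, h1⟩ | ⟨_, h1⟩ | ⟨_, h1⟩ <;> rw [h1]
    · rw [one_mul]
    · exact AA_sq
    · exact BB1_sq
    · exact BB2_sq
  have hpair : ∀ z₁ z₂ : V, Γ.Adj z₁ z₂ → (fV z₁ * fV z₂) * (fV z₁ * fV z₂) = 1 := by
    intro z₁ z₂ hadj
    have hne : z₁ ≠ z₂ := hadj.ne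
    rcases hval z₁ with h1 | ⟨rfl, h1⟩ | ⟨rfl, h1⟩ | ⟨rfl, h1⟩
    · rw [h1, one_mul]; exact hsq z₂
    all_goals rcases hval z₂ with h2 | ⟨rfl, h2⟩ | ⟨rfl, h2⟩ | ⟨rfl, h2⟩
    all_goals first
      | (rw [h2, mul_one, h1]; first | exact AA_sq | exact BB1_sq | exact BB2_sq)
      | (exact absurd rfl hne)
      | (exact absurd hadj hadj1)
      | (exact absurd hadj hadj2)
      | (exact absurd hadj.symm hadj1)
      | (exact absurd hadj.symm hadj2)
      | (rw [h1, h2]; first | exact BB12_sq | exact BB21_sq)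
  -- the relators are satisfied
  have hrels : ∀ r ∈ racgRels Γ, FreeGroup.lift fV r = 1 := by
    rintro r (⟨z, rfl⟩ | ⟨z₁, z₂, hadj, rfl⟩)
    · rw [map_mul, FreeGroup.lift_apply_of]; exact hsq z
    · rw [map_pow, map_mul]
      simp only [FreeGroup.lift_apply_of]
      rw [pow_two]
      exact hpair z₁ z₂ hadj
  let g : RACG Γ →* TT := PresentedGroup.toGroup hrels
  have hg_of : ∀ z : V, g (PresentedGroup.of z) = fV z := fun z => PresentedGroup.toGroup.of hrels
  let π : RACG Γ →* QK := SemidirectProduct.rightHom.comp g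
  have hfinite : π.ker.FiniteIndex := by
    have : Finite π.range := Subtype.finite
    exact Subgroup.finiteIndex_ker π
  -- the two witnesses
  let a : RACG Γ := PresentedGroup.of u
  let b₁ : RACG Γ := PresentedGroup.of v
  let b₂ : RACG Γ := PresentedGroup.of w
  have hga : g a = AA := by rw [hg_of, hvalu]
  have hgb1 : g b₁ = BB1 := by rw [hg_of, hvalv]
  have hgb2 : g b₂ = BB2 := by rw [hg_of, hvalw]
  have hw1 : g (a * b₁) = (⟨FreeGroup.of 0, 1⟩ : TT) := by
    rw [map_mul, hga, hgb1, word1]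
  have hw2 : g (b₂ * a * b₂ * b₁) = (⟨FreeGroup.of 1, 1⟩ : TT) := by
    rw [map_mul, map_mul, map_mul, hga, hgb1, hgb2, word2]
  have hm1 : a * b₁ ∈ π.ker := by
    show SemidirectProduct.rightHom (g (a * b₁)) = 1
    rw [hw1]; rfl
  have hm2 : b₂ * a * b₂ * b₁ ∈ π.ker := by
    show SemidirectProduct.rightHom (g (b₂ * a * b₂ * b₁)) = 1
    rw [hw2]; rfl
  -- the homomorphism onto the free group
  let ψ : π.ker →* FG2 :=
    { toFun := fun h => (g h).left
      map_one' := by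
        show (g ((1 : π.ker) : RACG Γ)).left = 1
        rw [OneMemClass.coe_one, map_one]
        rfl
      map_mul' := by
        intro h₁ h₂
        show (g (↑h₁ * ↑h₂)).left = _
        rw [map_mul, SemidirectProduct.mul_left]
        have hr : (g ↑h₁).right = 1 := h₁.2
        rw [hr, map_one, MulAut.one_apply] }
  refine ⟨π.ker, hfinite, ψ, ?_⟩
  rw [← MonoidHom.range_eq_top]
  rw [eq_top_iff, ← FreeGroup.closure_range_of (Fin 2)]
  rw [Subgroup.closure_le]
  rintro _ ⟨i, rfl⟩
  fin_cases i
  · exact ⟨⟨a * b₁, hm1⟩, by show (g (a * b₁)).left = _; rw [hw1]; rfl⟩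
  · exact ⟨⟨b₂ * a * b₂ * b₁, hm2⟩, by show (g (b₂ * a * b₂ * b₁)).left = _; rw [hw2]; rfl⟩

end LargeDirection

/-- In a group of finite index, some positive power of every element lies in the subgroup. -/
lemma exists_pow_mem_of_finiteIndex {G : Type*} [Group G] (M : Subgroup G) [M.FiniteIndex]
    (g : G) : ∃ n : ℕ, 0 < n ∧ g ^ n ∈ M := by
  have key : ∀ i j : ℕ, i < j → ((g ^ i : G) : G ⧸ M) = ((g ^ j : G) : G ⧸ M) →
      ∃ n : ℕ, 0 < n ∧ g ^ n ∈ M := by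
    intro i j hij heq
    refine ⟨j - i, by omega, ?_⟩
    have h3 := QuotientGroup.eq.mp heq
    have h4 : (g ^ i)⁻¹ * g ^ j = g ^ (j - i) := by
      have h5 : g ^ j = g ^ i * g ^ (j - i) := by
        rw [← pow_add]
        congr 1
        omega
      rw [h5, inv_mul_cancel_left]
    rwa [h4] at h3
  obtain ⟨i, j, hne, heq⟩ :=
    Finite.exists_ne_map_eq_of_infinite (fun n : ℕ => ((g ^ n : G) : G ⧸ M))
  rcases Nat.lt_or_gt_of_ne hne with hij | hij
  · exact key i j hij heq
  · exact key j i hij heq.symm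

section RACGBasics

variable {V : Type*} (Γ : SimpleGraph V)

/-- Shorthand for the generator of the RACG. -/
noncomputable def ofv (z : V) : RACG Γ := PresentedGroup.of z

lemma racg_rel_one {r : FreeGroup V} (hr : r ∈ racgRels Γ) :
    (PresentedGroup.mk (racgRels Γ) r : RACG Γ) = 1 := by
  apply (QuotientGroup.eq_one_iff _).mpr
  exact Subgroup.subset_normalClosure hr

lemma gen_sq (z : V) : ofv Γ z * ofv Γ z = 1 := by
  have := racg_rel_one Γ (Or.inl ⟨z, rfl⟩)
  rw [map_mul] at this
  exact this

lemma gen_inv (z : V) : (ofv Γ z)⁻¹ = ofv Γ z :=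
  inv_eq_of_mul_eq_one_right (gen_sq Γ z)

lemma adj_commute {z z' : V} (h : Γ.Adj z z') : Commute (ofv Γ z) (ofv Γ z') := by
  have h4 : (ofv Γ z * ofv Γ z') * (ofv Γ z * ofv Γ z') = 1 := by
    have := racg_rel_one Γ (Or.inr ⟨z, z', h, rfl⟩)
    rw [map_pow, map_mul, pow_two] at this
    exact this
  show ofv Γ z * ofv Γ z' = ofv Γ z' * ofv Γ z
  have h5 : ofv Γ z * ofv Γ z' = (ofv Γ z * ofv Γ z')⁻¹ :=
    (inv_eq_of_mul_eq_one_right h4).symm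
  rw [h5, mul_inv_rev, gen_inv, gen_inv]

lemma inv_pair (p q : V) : (ofv Γ p * ofv Γ q) * (ofv Γ q * ofv Γ p) = 1 := by
  have h1 : ofv Γ q * (ofv Γ q * ofv Γ p) = ofv Γ p := by
    rw [← mul_assoc, gen_sq, one_mul]
  rw [mul_assoc, h1, gen_sq]

end RACGBasics

theorem not_isLarge_racg {V : Type} [Fintype V] (Γ : SimpleGraph V)
    (hyp : ¬HasVertexWithTwoNonNeighbors Γ) : ¬IsLarge (RACG Γ) := by
  classical
  -- every vertex has at most one non-neighbour
  have NB : ∀ p q r : V, q ≠ p → r ≠ p → ¬Γ.Adj p q → ¬Γ.Adj p r → q = r := by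
    intro p q r hq hr h1 h2
    by_contra hne
    exact hyp ⟨p, q, r, hne, hq, hr, h1, h2⟩
  set S : Set (RACG Γ) :=
    {x | ∃ a b : V, ¬Γ.Adj a b ∧ a ≠ b ∧ x = ofv Γ a * ofv Γ b} with hS
  set A : Subgroup (RACG Γ) := Subgroup.closure S with hA
  -- elements of S commute pairwise
  have commS : ∀ x ∈ S, ∀ y ∈ S, Commute x y := by
    rintro x ⟨a, b, hab, hne, rfl⟩ y ⟨a', b', hab', hne', rfl⟩
    by_cases haa' : a = a'
    · subst haa'
      have hbb : b = b' := NB a b b' hne.symm hne'.symm hab hab'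
      subst hbb
      exact Commute.refl _
    by_cases hab'' : a = b'
    · -- the two pairs are reverses of each other
      have hne2 : a' ≠ a := fun h => hne' (h.trans hab'')
      have hnadj : ¬Γ.Adj a a' := fun h => hab' (by rw [← hab'']; exact h.symm)
      have hb : b = a' := NB a b a' hne.symm hne2 hab hnadj
      subst hb
      subst hab''
      exact (inv_pair Γ _ _).trans (inv_pair Γ _ _).symm
    by_cases hba' : b = a'
    · exfalso
      apply hab''
      have h1 : ¬Γ.Adj b a := fun h => hab h.symm
      have h2 : ¬Γ.Adj b b' := fun h => hab' (hba' ▸ h)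
      have hb'b : b' ≠ b := fun h => hne' (hba'.symm ▸ h.symm ▸ rfl : a' = b')
      exact NB b a b' hne hb'b h1 h2
    by_cases hbb' : b = b'
    · exfalso
      apply haa'
      have h1 : ¬Γ.Adj b a := fun h => hab h.symm
      have h2 : ¬Γ.Adj b a' := fun h => hab' (hbb' ▸ h.symm)
      exact NB b a a' hne (fun h => hba' h.symm) h1 h2
    · -- all four vertices distinct: everything is adjacent across the pairs
      have had1 : Γ.Adj a a' := by
        by_contra hn
        exact hba' (NB a b a' hne.symm (fun h => haa' h.symm) hab hn)
      have had2 : Γ.Adj a b' := by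
        by_contra hn
        exact hbb' (NB a b b' hne.symm (fun h => hab'' h.symm) hab hn)
      have had3 : Γ.Adj b a' := by
        by_contra hn
        exact hbb' (NB a' b b' hba' hne'.symm (fun h => hn h.symm) hab')
      have had4 : Γ.Adj b b' := by
        by_contra hn
        exact hba' (NB b' b a' hbb' hne' (fun h => hn h.symm) (fun h => hab' h.symm))
      have c1 : Commute (ofv Γ a) (ofv Γ a' * ofv Γ b') :=
        (adj_commute Γ had1).mul_right (adj_commute Γ had2)
      have c2 : Commute (ofv Γ b) (ofv Γ a' * ofv Γ b') :=
        (adj_commute Γ had3).mul_right (adj_commute Γ had4)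
      exact c1.mul_left c2
  -- elements of A commute pairwise
  have commA : ∀ x ∈ A, ∀ y ∈ A, Commute x y := by
    intro x hx y hy
    exact Subgroup.closure_induction₂ (p := fun x y _ _ => Commute x y)
      (fun x y hx hy => commS x hx y hy)
      (fun x _ => Commute.one_left x) (fun x _ => Commute.one_right x)
      (fun x y z _ _ _ h1 h2 => h1.mul_left h2)
      (fun y z x _ _ _ h1 h2 => h1.mul_right h2)
      (fun x y _ _ h => h.inv_left) (fun x y _ _ h => h.inv_right) hx hy
  -- conjugating generators of A by group generators stays in A
  have hconj_gen : ∀ z : V, ∀ x ∈ S, ofv Γ z * x * (ofv Γ z)⁻¹ ∈ A := by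
    rintro z x ⟨a, b, hab, hne, rfl⟩
    rw [gen_inv]
    by_cases hza : z = a
    · subst hza
      have e : ofv Γ z * (ofv Γ z * ofv Γ b) * ofv Γ z = ofv Γ b * ofv Γ z := by
        rw [← mul_assoc, gen_sq, one_mul]
      rw [e]
      exact Subgroup.subset_closure ⟨b, z, fun h => hab h.symm, hne.symm, rfl⟩
    by_cases hzb : z = b
    · subst hzb
      have e : ofv Γ z * (ofv Γ a * ofv Γ z) * ofv Γ z = ofv Γ z * ofv Γ a := by
        rw [mul_assoc, mul_assoc, gen_sq, mul_one]

      rw [e]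
      exact Subgroup.subset_closure ⟨z, a, fun h => hab h.symm, hne.symm, rfl⟩
    · have hz1 : Γ.Adj z a := by
        by_contra hn
        exact hzb (NB a b z hne.symm hza hab (fun h => hn h.symm)).symm
      have hz2 : Γ.Adj z b := by
        by_contra hn
        exact hza (NB b a z hne hzb (fun h => hab h.symm) (fun h => hn h.symm)).symm
      have c : Commute (ofv Γ z) (ofv Γ a * ofv Γ b) :=
        (adj_commute Γ hz1).mul_right (adj_commute Γ hz2)
      rw [c.eq, mul_assoc, gen_sq, mul_one]
      exact Subgroup.subset_closure ⟨a, b, hab, hne, rfl⟩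
  have hconjA_gen : ∀ z : V, ∀ x ∈ A, ofv Γ z * x * (ofv Γ z)⁻¹ ∈ A := by
    intro z x hx
    refine Subgroup.closure_induction (p := fun x _ => ofv Γ z * x * (ofv Γ z)⁻¹ ∈ A)
      (fun y hy => hconj_gen z y hy) ?_ ?_ ?_ hx
    · simpa using A.one_mem
    · intro x y _ _ hx' hy'
      have e : ofv Γ z * (x * y) * (ofv Γ z)⁻¹ =
          (ofv Γ z * x * (ofv Γ z)⁻¹) * (ofv Γ z * y * (ofv Γ z)⁻¹) := by group
      rw [e]
      exact A.mul_mem hx' hy'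
    · intro x _ hx'
      have e : ofv Γ z * x⁻¹ * (ofv Γ z)⁻¹ = (ofv Γ z * x * (ofv Γ z)⁻¹)⁻¹ := by group
      rw [e]
      exact A.inv_mem hx'
  have hgen : Subgroup.closure (Set.range (ofv Γ)) = ⊤ :=
    PresentedGroup.closure_range_of (racgRels Γ)
  have hnormal : A.Normal := by
    constructor
    intro n hn gg
    have hgg : gg ∈ Subgroup.closure (Set.range (ofv Γ)) := by rw [hgen]; trivial
    refine Subgroup.closure_induction
      (p := fun gg _ => ∀ n ∈ A, gg * n * gg⁻¹ ∈ A ∧ gg⁻¹ * n * gg ∈ A)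
      ?_ ?_ ?_ ?_ hgg n hn |>.1
    · rintro _ ⟨z, rfl⟩ n hn
      constructor
      · exact hconjA_gen z n hn
      · rw [gen_inv]
        have := hconjA_gen z n hn
        rwa [gen_inv] at this
    · intro n hn
      have e : (1 : RACG Γ) * n * (1 : RACG Γ)⁻¹ = n := by group
      have e2 : (1 : RACG Γ)⁻¹ * n * (1 : RACG Γ) = n := by group
      rw [e, e2]
      exact ⟨hn, hn⟩
    · intro x y _ _ hx' hy' n hn
      constructor
      · have e : x * y * n * (x * y)⁻¹ = x * (y * n * y⁻¹) * x⁻¹ := by group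
        rw [e]
        exact (hx' _ ((hy' n hn).1)).1
      · have e : (x * y)⁻¹ * n * (x * y) = y⁻¹ * (x⁻¹ * n * x) * y := by group
        rw [e]
        exact (hy' _ ((hx' n hn).2)).2
    · intro x _ hx' n hn
      constructor
      · have e : x⁻¹ * n * x⁻¹⁻¹ = x⁻¹ * n * x := by rw [inv_inv]
        rw [e]
        exact (hx' n hn).2
      · have e : x⁻¹⁻¹ * n * x⁻¹ = x * n * x⁻¹ := by rw [inv_inv]
        rw [e]
        exact (hx' n hn).1
  haveI := hnormal
  -- the quotient is finite
  set qg : V → RACG Γ ⧸ A := fun z => QuotientGroup.mk (ofv Γ z) with hqg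
  have hq_sq : ∀ z, qg z * qg z = 1 := by
    intro z
    rw [hqg]
    show ((ofv Γ z * ofv Γ z : RACG Γ) : RACG Γ ⧸ A) = 1
    rw [gen_sq]
    rfl
  have hq_comm : ∀ z z' : V, Commute (qg z) (qg z') := by
    intro z z'
    by_cases hzz : z = z'
    · subst hzz; exact Commute.refl _
    by_cases hadj : Γ.Adj z z'
    · exact (adj_commute Γ hadj).map (QuotientGroup.mk' A)
    · have h1 : (qg z) * (qg z') = 1 := by
        show ((ofv Γ z * ofv Γ z' : RACG Γ) : RACG Γ ⧸ A) = 1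
        exact (QuotientGroup.eq_one_iff _).mpr
          (Subgroup.subset_closure ⟨z, z', hadj, hzz, rfl⟩)
      have h2 : (qg z') * (qg z) = 1 := by
        show ((ofv Γ z' * ofv Γ z : RACG Γ) : RACG Γ ⧸ A) = 1
        exact (QuotientGroup.eq_one_iff _).mpr
          (Subgroup.subset_closure ⟨z', z, fun h => hadj h.symm, Ne.symm hzz, rfl⟩)
      exact h1.trans h2.symm
  set ρ : ((z : V) → Multiplicative (ZMod 2)) →* RACG Γ ⧸ A :=
    MonoidHom.noncommPiCoprod (fun z => invHom (qg z) (hq_sq z))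
      (show Pairwise fun i j => ∀ x y : Multiplicative (ZMod 2),
          Commute (invHom (qg i) (hq_sq i) x) (invHom (qg j) (hq_sq j) y) from fun ⦃i j⦄ _ x y => by
        rw [invHom_pow, invHom_pow]
        exact (hq_comm i j).pow_pow _ _) with hρ
  have hρ_single : ∀ z : V, ρ (Pi.mulSingle z (Multiplicative.ofAdd 1)) = qg z := by
    intro z
    rw [hρ, MonoidHom.noncommPiCoprod_mulSingle, invHom_apply_one]
  have hρ_surj : Function.Surjective ρ := by
    rw [← MonoidHom.range_eq_top, eq_top_iff]
    have h1 : (⊤ : Subgroup (RACG Γ ⧸ A)) = Subgroup.map (QuotientGroup.mk' A) ⊤ :=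
      (Subgroup.map_top_of_surjective _ (QuotientGroup.mk'_surjective A)).symm
    rw [h1, ← hgen, MonoidHom.map_closure]
    apply Subgroup.closure_le _ |>.mpr
    rintro _ ⟨_, ⟨z, rfl⟩, rfl⟩
    exact ⟨Pi.mulSingle z (Multiplicative.ofAdd 1), hρ_single z⟩
  have hfinQ : Finite (RACG Γ ⧸ A) := Finite.of_surjective ρ hρ_surj
  haveI := hfinQ
  haveI hAfin : A.FiniteIndex := Subgroup.finiteIndex_of_finite_quotient
  -- now derive the contradiction
  rintro ⟨H, hHfi, f, hfsurj⟩
  haveI := hHfi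
  set B : Subgroup H := A.subgroupOf H with hB
  haveI hBfi : B.FiniteIndex := Subgroup.instFiniteIndex_subgroupOf A H
  set M : Subgroup (FreeGroup (Fin 2)) := Subgroup.map f B with hM
  have hMfi : M.FiniteIndex := by
    constructor
    have h1 : (M.comap f).index = M.index := Subgroup.index_comap_of_surjective M hfsurj
    have h2 : B ≤ M.comap f := fun b hb => Subgroup.mem_comap.mpr (Subgroup.mem_map_of_mem f hb)
    have h3 := Subgroup.index_dvd_of_le h2
    rw [h1] at h3
    intro h0
    rw [h0] at h3
    exact hBfi.index_ne_zero (zero_dvd_iff.mp h3)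
  haveI := hMfi
  have hMcomm : ∀ p ∈ M, ∀ q ∈ M, Commute p q := by
    rintro _ ⟨b1, hb1, rfl⟩ _ ⟨b2, hb2, rfl⟩
    have h1 : (b1 : RACG Γ) ∈ A := Subgroup.mem_subgroupOf.mp hb1
    have h2 : (b2 : RACG Γ) ∈ A := Subgroup.mem_subgroupOf.mp hb2
    have hc : Commute (b1 : RACG Γ) (b2 : RACG Γ) := commA _ h1 _ h2
    have hcH : Commute b1 b2 := Subtype.ext hc
    exact hcH.map f
  obtain ⟨m, hm, hxm⟩ := exists_pow_mem_of_finiteIndex M (FreeGroup.of (0 : Fin 2))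
  obtain ⟨n, hn, hyn⟩ := exists_pow_mem_of_finiteIndex M (FreeGroup.of (1 : Fin 2))
  exact freeGroup_pow_not_commute hm hn (hMcomm _ hxm _ hyn)

/-- A right-angled Coxeter group is large iff some vertex of the graph is non-adjacent to at
least two other vertices. -/
theorem racg_isLarge_iff {V : Type} [Fintype V] (Γ : SimpleGraph V) :
    IsLarge (RACG Γ) ↔ HasVertexWithTwoNonNeighbors Γ := by
  constructor
  · intro hL
    by_contra hcond
    exact not_isLarge_racg Γ hcond hL
  · exact isLarge_of_hasVertex Γ
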